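/- For every s ∈ [0,1) and every diagonal real matrix U on ℂ^{2^N}, the Hermitian matrix h(s) = −(1−s)Δ + s·U has a unique (non-degenerate) lowest eigenvalue, and a corresponding eigenvector can be chosen with all entries strictly positive. -/

import Mathlib

/-- The graph Laplacian of the Hamming cube `{0,1}^N`. -/
noncomputable def hammingLap (N : ℕ) : Matrix (Fin N → Bool) (Fin N → Bool) ℝ :=
  fun σ σ' => if σ = σ' then -(N : ℝ) else if hammingDist σ σ' = 1 then 1 else 0

open Matrix

open Finset in
/-- Connectivity of the Hamming cube: a predicate stable under flipping one
coordinate that holds somewhere holds everywhere. -/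
lemma hamming_connect {N : ℕ} (P : (Fin N → Bool) → Prop)
    (hstep : ∀ σ σ', hammingDist σ σ' = 1 → P σ → P σ')
    (σ₀ : Fin N → Bool) (h0 : P σ₀) : ∀ σ, P σ := by
  suffices H : ∀ d σ, hammingDist σ₀ σ = d → P σ by
    intro σ; exact H _ σ rfl
  intro d
  induction d using Nat.strong_induction_on with
  | _ d ih =>
    intro σ hd
    rcases Nat.eq_zero_or_pos d with h | h
    · subst h
      rw [hammingDist_eq_zero] at hd
      rwa [← hd]
    · have hne : σ₀ ≠ σ := by
        intro he; rw [he, hammingDist_self] at hd; omega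
      have : ∃ i, σ₀ i ≠ σ i := Function.ne_iff.mp hne
      obtain ⟨i, hi⟩ := this
      set σ'' := Function.update σ i (σ₀ i) with hσ''
      have h1 : hammingDist σ'' σ = 1 := by
        have : ({j | σ'' j ≠ σ j} : Finset (Fin N)) = {i} := by
          ext j
          by_cases hji : j = i
          · subst hji; simp [hσ'', Function.update_self, hi]
          · simp [hσ'', Function.update_of_ne hji, hji]
        simp [hammingDist, this]
      have hmem : i ∈ ({j | σ₀ j ≠ σ j} : Finset (Fin N)) := by simpa using hi
      have h2 : hammingDist σ₀ σ'' < d := by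
        have hset : ({j | σ₀ j ≠ σ'' j} : Finset (Fin N))
            = ({j | σ₀ j ≠ σ j} : Finset (Fin N)).erase i := by
          ext j
          by_cases hji : j = i
          · subst hji; simp [hσ'', Function.update_self]
          · simp [hσ'', Function.update_of_ne hji, hji]
        have := Finset.card_erase_lt_of_mem hmem
        rw [← hd]
        simpa [hammingDist, hset] using this
      exact hstep σ'' σ h1 (ih _ h2 σ'' rfl)
lemma pos_of_nonneg_eig {N : ℕ} {M : Matrix (Fin N → Bool) (Fin N → Bool) ℝ}
    (hedge : ∀ σ σ', hammingDist σ σ' = 1 → M σ σ' < 0)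
    {E : ℝ} {v : (Fin N → Bool) → ℝ}
    (hoff : ∀ σ σ', σ ≠ σ' → M σ σ' ≤ 0)
    (hv : M *ᵥ v = E • v) (hnn : ∀ σ, 0 ≤ v σ) (hne : v ≠ 0) :
    ∀ σ, 0 < v σ := by
  obtain ⟨σ₀, hσ₀⟩ := Function.ne_iff.mp hne
  have h0 : 0 < v σ₀ := lt_of_le_of_ne (hnn σ₀) (Ne.symm hσ₀)
  refine hamming_connect (fun σ => 0 < v σ) ?_ σ₀ h0
  intro σ σ' hdist hσ
  rcases (hnn σ').lt_or_eq with h | h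
  · exact h
  · exfalso
    have hss : σ ≠ σ' := by
      intro he; rw [he, hammingDist_self] at hdist; omega
    have hMv : (M *ᵥ v) σ' = 0 := by rw [hv]; simp [← h]
    have hsum : ∑ τ, M σ' τ * v τ = 0 := by
      simpa [Matrix.mulVec, dotProduct] using hMv
    have hterms : ∀ τ ∈ Finset.univ, M σ' τ * v τ ≤ 0 := by
      intro τ _
      by_cases hτ : τ = σ'
      · subst hτ; rw [← h]; simp
      · exact mul_nonpos_of_nonpos_of_nonneg (hoff σ' τ (Ne.symm hτ)) (hnn τ)
    have hzero := (Finset.sum_eq_zero_iff_of_nonpos hterms).mp hsum σ (Finset.mem_univ σ)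
    have hneg : M σ' σ * v σ < 0 :=
      mul_neg_of_neg_of_pos (hedge σ' σ (by rwa [hammingDist_comm])) hσ
    exact hneg.ne hzero
lemma shifted_posSemidef {n : Type*} [Fintype n] [DecidableEq n]
    {M : Matrix n n ℝ} (hM : M.IsHermitian) {E₀ : ℝ}
    (hle : ∀ i, E₀ ≤ hM.eigenvalues i) :
    (M - E₀ • 1).PosSemidef := by
  have hofr : (RCLike.ofReal ∘ hM.eigenvalues : n → ℝ) = hM.eigenvalues := by
    funext i; simp [RCLike.ofReal]
  have hUU : (hM.eigenvectorUnitary : Matrix n n ℝ)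
      * star (hM.eigenvectorUnitary : Matrix n n ℝ) = 1 :=
    (Matrix.mem_unitaryGroup_iff).mp hM.eigenvectorUnitary.2
  have h2 : (hM.eigenvectorUnitary : Matrix n n ℝ) * Matrix.diagonal hM.eigenvalues
      * star (hM.eigenvectorUnitary : Matrix n n ℝ) = M := by
    conv_rhs => rw [hM.spectral_theorem]
    rw [hofr]; rfl
  have h1 : (hM.eigenvectorUnitary : Matrix n n ℝ) * (Matrix.diagonal fun _ : n => E₀)
      * star (hM.eigenvectorUnitary : Matrix n n ℝ) = E₀ • 1 := by
    rw [← Matrix.smul_one_eq_diagonal, Matrix.mul_smul, Matrix.smul_mul, mul_one, hUU]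
  have hkey : M - E₀ • 1 = (hM.eigenvectorUnitary : Matrix n n ℝ)
      * (Matrix.diagonal fun i => hM.eigenvalues i - E₀)
      * star (hM.eigenvectorUnitary : Matrix n n ℝ) := by
    conv_lhs => rw [← h2, ← h1]
    rw [← Matrix.sub_mul, ← Matrix.mul_sub, Matrix.diagonal_sub]
  rw [hkey, Matrix.star_eq_conjTranspose]
  exact (Matrix.posSemidef_diagonal_iff.mpr fun i => sub_nonneg.mpr (hle i)
    ).mul_mul_conjTranspose_same _
lemma rayleigh_lower {n : Type*} [Fintype n] [DecidableEq n]
    {M : Matrix n n ℝ} {E₀ : ℝ} (hPSD : (M - E₀ • 1).PosSemidef)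
    (x : n → ℝ) : E₀ * (x ⬝ᵥ x) ≤ x ⬝ᵥ (M *ᵥ x) := by
  have h := hPSD.dotProduct_mulVec_nonneg x
  simp only [star_trivial, Matrix.sub_mulVec, Matrix.smul_mulVec, Matrix.one_mulVec,
    dotProduct_sub, dotProduct_smul, smul_eq_mul] at h
  linarith

lemma abs_eig {n : Type*} [Fintype n] [DecidableEq n]
    {M : Matrix n n ℝ} {E₀ : ℝ}
    (hoff : ∀ σ σ', σ ≠ σ' → M σ σ' ≤ 0)
    (hPSD : (M - E₀ • 1).PosSemidef)
    {w : n → ℝ} (hw : M *ᵥ w = E₀ • w) :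
    M *ᵥ (fun σ => |w σ|) = E₀ • (fun σ => |w σ|) := by
  set x : n → ℝ := fun σ => |w σ| with hx
  have expand : ∀ y : n → ℝ, y ⬝ᵥ (M *ᵥ y) = ∑ σ, ∑ τ, M σ τ * (y σ * y τ) := by
    intro y
    simp only [dotProduct, Matrix.mulVec, Finset.mul_sum]
    exact Finset.sum_congr rfl fun σ _ => Finset.sum_congr rfl fun τ _ => by ring
  have hxx : x ⬝ᵥ x = w ⬝ᵥ w := by
    simp only [dotProduct, hx, abs_mul_abs_self]
  have hwMw : w ⬝ᵥ (M *ᵥ w) = E₀ * (w ⬝ᵥ w) := by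
    rw [hw, dotProduct_smul, smul_eq_mul]
  have hupper : x ⬝ᵥ (M *ᵥ x) ≤ w ⬝ᵥ (M *ᵥ w) := by
    rw [expand, expand]
    refine Finset.sum_le_sum fun σ _ => Finset.sum_le_sum fun τ _ => ?_
    by_cases hστ : σ = τ
    · subst hστ; simp [hx, abs_mul_abs_self]
    · refine mul_le_mul_of_nonpos_left ?_ (hoff σ τ hστ)
      calc w σ * w τ ≤ |w σ * w τ| := le_abs_self _
        _ = x σ * x τ := abs_mul _ _
  have hlow : E₀ * (x ⬝ᵥ x) ≤ x ⬝ᵥ (M *ᵥ x) := rayleigh_lower hPSD x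
  have heq : x ⬝ᵥ (M *ᵥ x) = E₀ * (x ⬝ᵥ x) := by
    rw [hxx]; rw [hxx] at hlow
    linarith [hupper.trans_eq hwMw]
  have hzero : (M - E₀ • 1) *ᵥ x = 0 := by
    rw [← hPSD.dotProduct_mulVec_zero_iff]
    simp only [star_trivial, Matrix.sub_mulVec, Matrix.smul_mulVec, Matrix.one_mulVec,
      dotProduct_sub, dotProduct_smul, smul_eq_mul]
    rw [heq]; ring
  have hsub : M *ᵥ x - E₀ • x = 0 := by
    simpa [Matrix.sub_mulVec, Matrix.smul_mulVec, Matrix.one_mulVec] using hzero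
  exact sub_eq_zero.mp hsub

/-- For every `s ∈ [0,1)` and every real diagonal `U`, the matrix
`h(s) = −(1−s)Δ + s·U` has a unique (non-degenerate) lowest eigenvalue, with an
eigenvector having strictly positive entries (Perron–Frobenius). -/
theorem stmt2 (N : ℕ) (s : ℝ) (hs : s ∈ Set.Ico (0 : ℝ) 1)
    (u : (Fin N → Bool) → ℝ) :
    ∃ E₀ : ℝ,
      IsLeast (spectrum ℝ ((1 - s) • (-(hammingLap N)) + s • Matrix.diagonal u)) E₀ ∧
      Module.finrank ℝ
        (Module.End.eigenspace
          (Matrix.mulVecLin ((1 - s) • (-(hammingLap N)) + s • Matrix.diagonal u)) E₀) = 1 ∧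
      ∃ v : (Fin N → Bool) → ℝ,
        ((1 - s) • (-(hammingLap N)) + s • Matrix.diagonal u).mulVec v = E₀ • v ∧
        ∀ σ, 0 < v σ := by
  obtain ⟨hs0, hs1⟩ := hs
  have hspos : 0 < 1 - s := by linarith
  set M : Matrix (Fin N → Bool) (Fin N → Bool) ℝ :=
    (1 - s) • (-(hammingLap N)) + s • Matrix.diagonal u with hMdef
  -- off-diagonal entries
  have hentry : ∀ σ σ', σ ≠ σ' →
      M σ σ' = -((1 - s) * (if hammingDist σ σ' = 1 then 1 else 0)) := by
    intro σ σ' hne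
    simp only [hMdef, Matrix.add_apply, Matrix.smul_apply, Matrix.neg_apply,
      Matrix.diagonal_apply_ne _ hne, hammingLap, if_neg hne, smul_eq_mul]
    ring
  have hoff : ∀ σ σ', σ ≠ σ' → M σ σ' ≤ 0 := by
    intro σ σ' hne
    rw [hentry σ σ' hne]
    by_cases h : hammingDist σ σ' = 1 <;> simp [h] <;> linarith
  have hedge : ∀ σ σ', hammingDist σ σ' = 1 → M σ σ' < 0 := by
    intro σ σ' h
    have hne : σ ≠ σ' := by
      intro he; rw [he, hammingDist_self] at h; omega
    rw [hentry σ σ' hne, if_pos h]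
    simpa using hspos
  have hM : M.IsHermitian := by
    show Mᴴ = M
    apply Matrix.ext
    intro σ σ'
    rw [Matrix.conjTranspose_apply, star_trivial]
    by_cases hne : σ = σ'
    · rw [hne]
    · rw [hentry σ' σ (Ne.symm hne), hentry σ σ' hne, hammingDist_comm]
  -- the minimal eigenvalue
  obtain ⟨i₀, -, hi₀⟩ := Finset.exists_min_image Finset.univ hM.eigenvalues
    Finset.univ_nonempty
  set E₀ : ℝ := hM.eigenvalues i₀ with hE₀def
  have hle : ∀ i, E₀ ≤ hM.eigenvalues i := fun i => hi₀ i (Finset.mem_univ i)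
  have hPSD : (M - E₀ • 1).PosSemidef := shifted_posSemidef hM hle
  -- eigenvector for E₀
  set v₀ : (Fin N → Bool) → ℝ := ⇑(hM.eigenvectorBasis i₀) with hv₀def
  have hv₀eig : M *ᵥ v₀ = E₀ • v₀ := hM.mulVec_eigenvectorBasis i₀
  have hv₀ne : v₀ ≠ 0 := by
    intro h
    have hb : hM.eigenvectorBasis i₀ ≠ 0 := by
      have := hM.eigenvectorBasis.toBasis.ne_zero i₀
      simpa using this
    apply hb
    ext σ
    exact congrFun h σ
  -- positive eigenvector
  set v : (Fin N → Bool) → ℝ := fun σ => |v₀ σ| with hvdef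
  have hveig : M *ᵥ v = E₀ • v := abs_eig hoff hPSD hv₀eig
  have hvne : v ≠ 0 := by
    intro h
    apply hv₀ne
    funext σ
    have := congrFun h σ
    simpa [hvdef, abs_eq_zero] using this
  have hvpos : ∀ σ, 0 < v σ :=
    pos_of_nonneg_eig hedge hoff hveig (fun σ => abs_nonneg _) hvne
  -- every element of the spectrum is at least E₀
  have hlb : ∀ E ∈ spectrum ℝ M, E₀ ≤ E := by
    intro E hE
    rw [spectrum.mem_iff] at hE
    have hdet : ((algebraMap ℝ (Matrix (Fin N → Bool) (Fin N → Bool) ℝ) E) - M).det = 0 := by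
      by_contra h
      exact hE ((Matrix.isUnit_iff_isUnit_det _).mpr (isUnit_iff_ne_zero.mpr h))
    obtain ⟨w, hw0, hw⟩ := (Matrix.exists_mulVec_eq_zero_iff).mpr hdet
    have hweig : M *ᵥ w = E • w := by
      rw [Algebra.algebraMap_eq_smul_one, Matrix.sub_mulVec, Matrix.smul_mulVec,
        Matrix.one_mulVec] at hw
      rw [eq_comm, ← sub_eq_zero]
      exact hw
    have hray : E₀ * (w ⬝ᵥ w) ≤ w ⬝ᵥ (M *ᵥ w) := rayleigh_lower hPSD w
    rw [hweig, dotProduct_smul, smul_eq_mul] at hray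
    have hwpos : 0 < w ⬝ᵥ w := by
      obtain ⟨τ, hτ⟩ := Function.ne_iff.mp hw0
      simp only [dotProduct]
      exact Finset.sum_pos' (fun i _ => mul_self_nonneg _)
        ⟨τ, Finset.mem_univ τ, mul_self_pos.mpr hτ⟩
    exact le_of_mul_le_mul_right hray hwpos
  have hmemspec : E₀ ∈ spectrum ℝ M := hM.eigenvalues_mem_spectrum_real i₀
  refine ⟨E₀, ⟨hmemspec, fun E hE => hlb E hE⟩, ?_, v, hveig, hvpos⟩
  -- dimension of the eigenspace
  set W := Module.End.eigenspace (Matrix.mulVecLin M) E₀ with hWdef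
  have hmemW : ∀ w : (Fin N → Bool) → ℝ, w ∈ W ↔ M *ᵥ w = E₀ • w := by
    intro w
    rw [hWdef, Module.End.mem_eigenspace_iff, Matrix.mulVecLin_apply]
  have hnovan : ∀ w : (Fin N → Bool) → ℝ, M *ᵥ w = E₀ • w → w ≠ 0 → ∀ σ, w σ ≠ 0 := by
    intro w hw hne σ
    have habs : M *ᵥ (fun σ => |w σ|) = E₀ • (fun σ => |w σ|) := abs_eig hoff hPSD hw
    have habsne : (fun σ => |w σ|) ≠ 0 := by
      intro h; apply hne; funext ρ; simpa [abs_eq_zero] using congrFun h ρ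
    have hpos := pos_of_nonneg_eig hedge hoff habs (fun _ => abs_nonneg _) habsne σ
    exact abs_pos.mp hpos
  obtain ⟨τ⟩ : Nonempty (Fin N → Bool) := inferInstance
  set φ : W →ₗ[ℝ] ℝ := (LinearMap.proj τ).comp W.subtype with hφdef
  have hφinj : Function.Injective φ := by
    rw [← LinearMap.ker_eq_bot, LinearMap.ker_eq_bot']
    rintro ⟨w, hwW⟩ hm
    have hwτ : w τ = 0 := hm
    rw [Submodule.mk_eq_zero]
    by_contra hne0
    exact hnovan w ((hmemW w).mp hwW) hne0 τ hwτ
  have hfin1 : Module.finrank ℝ W ≤ 1 := by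
    have := LinearMap.finrank_le_finrank_of_injective hφinj
    simpa using this
  have hvW : v ∈ W := (hmemW v).mpr hveig
  have hnt : Nontrivial W := by
    refine nontrivial_of_ne ⟨v, hvW⟩ 0 ?_
    simp only [ne_eq, Submodule.mk_eq_zero]
    exact hvne
  have hfin2 : 0 < Module.finrank ℝ W := Module.finrank_pos
  omega
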